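/- arXiv:1806.09368 — 2 statements merged into one kernel-verified Lean document; each statement's English description precedes it below -/
import Mathlib

section
/- There exists a nonempty Π⁰₁ class of infinite binary sequences that contains no computable member. -/
/-- Partial functions recursive in an oracle `O : ℕ → ℕ` (oracle partial recursion). -/
inductive RecursiveInOracle (O : ℕ → ℕ) : (ℕ →. ℕ) → Prop
  | zero : RecursiveInOracle O (pure 0)
  | succ : RecursiveInOracle O Nat.succ
  | left : RecursiveInOracle O ↑fun n : ℕ => n.unpair.1
  | right : RecursiveInOracle O ↑fun n : ℕ => n.unpair.2
  | oracle : RecursiveInOracle O ↑O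
  | pair {f g} : RecursiveInOracle O f → RecursiveInOracle O g →
      RecursiveInOracle O fun n => Nat.pair <$> f n <*> g n
  | comp {f g} : RecursiveInOracle O f → RecursiveInOracle O g →
      RecursiveInOracle O fun n => g n >>= f
  | prec {f g} : RecursiveInOracle O f → RecursiveInOracle O g →
      RecursiveInOracle O (Nat.unpaired fun a n =>
        n.rec (f a) fun y IH => do let i ← IH; g (Nat.pair a (Nat.pair y i)))
  | rfind {f} : RecursiveInOracle O f →
      RecursiveInOracle O fun a => Nat.rfind fun n => (fun m => m = 0) <$> f (Nat.pair a n)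

/-- The oracle (characteristic function on `ℕ`) associated to a point of Cantor space. -/
def boolOracle (A : ℕ → Bool) : ℕ → ℕ := fun n => (A n).toNat

/-- Turing reducibility `A ≤ᵀ B` for points of Cantor space. -/
def TuringLE (A B : ℕ → Bool) : Prop :=
  RecursiveInOracle (boolOracle B) fun n => Part.some ((A n).toNat)

/-- Strict Turing reducibility `A <ᵀ B`. -/
def TuringLT (A B : ℕ → Bool) : Prop :=
  TuringLE A B ∧ ¬ TuringLE B A

/-- `A` is computable iff it is reducible to the empty oracle. -/
def ComputableSet (A : ℕ → Bool) : Prop :=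
  TuringLE A fun _ => false

/-- `P` is a `Π⁰₁` class: the set of infinite paths through a computable,
downward-closed set of finite binary strings. -/
def IsPi01Class (P : Set (ℕ → Bool)) : Prop :=
  ∃ T : List Bool → Bool, Computable T ∧
    (∀ σ τ : List Bool, σ <+: τ → T τ = true → T σ = true) ∧
    ∀ A : ℕ → Bool, A ∈ P ↔ ∀ n : ℕ, T ((List.range n).map A) = true
open Nat.Partrec.Code Denumerable

def specStep (σ : List Bool) (e : ℕ) : Bool :=
  match evaln σ.length (ofNat Nat.Partrec.Code e) e with
  | none => true
  | some v => !(σ.getD e false == (v == 1))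

def specT (σ : List Bool) : Bool :=
  (List.range σ.length).foldr (fun e r => specStep σ e && r) true

lemma specStep_eq_of_some {σ : List Bool} {e k v : ℕ} (hk : σ.length = k)
    (h : evaln k (ofNat Nat.Partrec.Code e) e = some v) :
    specStep σ e = !(σ.getD e false == (v == 1)) := by
  subst hk; simp [specStep, h]

lemma specStep_eq_of_none {σ : List Bool} {e k : ℕ} (hk : σ.length = k)
    (h : evaln k (ofNat Nat.Partrec.Code e) e = none) :
    specStep σ e = true := by
  subst hk; simp [specStep, h]

lemma foldr_and_eq_true (p : ℕ → Bool) (l : List ℕ) :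
    (l.foldr (fun e r => p e && r) true = true) ↔ ∀ e ∈ l, p e = true := by
  induction l with
  | nil => simp
  | cons a l ih => simp [Bool.and_eq_true, ih]

lemma specT_iff (σ : List Bool) :
    specT σ = true ↔ ∀ e ∈ List.range σ.length, specStep σ e = true :=
  foldr_and_eq_true _ _

lemma primrec_specStep : Primrec₂ specStep := by
  have ho : Primrec fun p : List Bool × ℕ =>
      evaln p.1.length (ofNat Nat.Partrec.Code p.2) p.2 :=
    primrec_evaln.comp ((((Primrec.list_length.comp Primrec.fst).pair
      ((Primrec.ofNat _).comp Primrec.snd)).pair Primrec.snd))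
  have hg : Primrec₂ fun (p : List Bool × ℕ) (v : ℕ) =>
      !(p.1.getD p.2 false == (v == 1)) :=
    Primrec.not.comp <| Primrec.beq.comp
      ((Primrec.list_getD false).comp (Primrec.fst.comp Primrec.fst)
        (Primrec.snd.comp Primrec.fst))
      (Primrec.beq.comp Primrec.snd (Primrec.const 1))
  exact (Primrec.option_casesOn ho (Primrec.const true) hg).of_eq fun p => by
    rcases p with ⟨σ, e⟩
    cases h : evaln σ.length (ofNat Nat.Partrec.Code e) e <;> simp [specStep, h]

lemma primrec_specT : Primrec specT := by
  have := Primrec.list_foldr (f := fun σ : List Bool => List.range σ.length)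
    (g := fun _ : List Bool => true)
    (h := fun σ (p : ℕ × Bool) => specStep σ p.1 && p.2)
    (Primrec.list_range.comp Primrec.list_length) (Primrec.const true)
    (Primrec.and.comp₂ (primrec_specStep.comp₂ Primrec₂.left
        (Primrec.fst.comp₂ Primrec₂.right))
      (Primrec.snd.comp₂ Primrec₂.right))
  exact this

lemma specT_downward {σ τ : List Bool} (h : σ <+: τ) (hτ : specT τ = true) :
    specT σ = true := by
  rw [specT_iff] at hτ ⊢
  intro e he
  rw [List.mem_range] at he
  have hle : σ.length ≤ τ.length := h.length_le
  cases hv : evaln σ.length (ofNat Nat.Partrec.Code e) e with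
  | none => exact specStep_eq_of_none rfl hv
  | some v =>
    have hv' : evaln τ.length (ofNat Nat.Partrec.Code e) e = some v :=
      evaln_mono hle hv
    have hτe := hτ e (List.mem_range.2 (lt_of_lt_of_le he hle))
    rw [specStep_eq_of_some rfl hv'] at hτe
    rw [specStep_eq_of_some rfl hv]
    have hget : σ.getD e false = τ.getD e false := by
      rw [List.getD_eq_getElem?_getD, List.getD_eq_getElem?_getD,
        List.getElem?_eq_getElem he, List.getElem?_eq_getElem (lt_of_lt_of_le he hle),
        h.getElem he]
    rw [hget]
    exact hτe

open scoped Classical in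
noncomputable def diagA : ℕ → Bool := fun e =>
  if h : ((ofNat Nat.Partrec.Code e).eval e).Dom then
    !(((ofNat Nat.Partrec.Code e).eval e).get h == 1)
  else false

lemma getD_map_range (A : ℕ → Bool) {e n : ℕ} (he : e < n) :
    ((List.range n).map A).getD e false = A e := by
  rw [List.getD_eq_getElem?_getD, List.getElem?_map, List.getElem?_range he]
  rfl

lemma len_map_range (A : ℕ → Bool) (n : ℕ) :
    ((List.range n).map A).length = n := by simp

lemma diagA_mem : ∀ n, specT ((List.range n).map diagA) = true := by
  intro n
  rw [specT_iff]
  intro e he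
  rw [len_map_range, List.mem_range] at he
  cases hv : evaln n (ofNat Nat.Partrec.Code e) e with
  | none => exact specStep_eq_of_none (len_map_range _ _) hv
  | some v =>
    rw [specStep_eq_of_some (len_map_range _ _) hv]
    have hvm : v ∈ (ofNat Nat.Partrec.Code e).eval e := evaln_sound hv
    have hdom : ((ofNat Nat.Partrec.Code e).eval e).Dom :=
      Part.dom_iff_mem.2 ⟨v, hvm⟩
    have hA : diagA e = !(v == 1) := by
      simp only [diagA, dif_pos hdom, Part.get_eq_of_mem hvm]
    rw [getD_map_range _ he, hA]
    cases v == 1 <;> rfl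

/-- There exists a nonempty `Π⁰₁` class containing no computable member. -/
theorem exists_special_Pi01_class :
    ∃ P : Set (ℕ → Bool), IsPi01Class P ∧ P.Nonempty ∧ ∀ A ∈ P, ¬ Computable A := by
  refine ⟨{A | ∀ n, specT ((List.range n).map A) = true}, ⟨specT, primrec_specT.to_comp,
    fun σ τ hpre hτ => specT_downward hpre hτ, fun A => Iff.rfl⟩, ⟨diagA, diagA_mem⟩, ?_⟩
  intro A hA hcomp
  have h1 : Computable fun n => (A n).toNat :=
    ((Primrec.dom_bool Bool.toNat).to_comp).comp hcomp
  have h2 : Nat.Partrec fun n => Part.some ((A n).toNat) := Partrec.nat_iff.1 h1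
  obtain ⟨c, hc⟩ := exists_code.1 h2
  set e := Encodable.encode c with he
  have hev : (A e).toNat ∈ eval c e := by rw [hc]; exact Part.mem_some _
  obtain ⟨k, hk⟩ := evaln_complete.1 hev
  set n := max k (e + 1) with hn
  have hkn : evaln n c e = some ((A e).toNat) := evaln_mono (le_max_left _ _) hk
  have hen : e < n := lt_of_lt_of_le (Nat.lt_succ_self e) (le_max_right _ _)
  have hmem := (specT_iff _).1 (hA n) e (by
    rw [len_map_range, List.mem_range]; exact hen)
  rw [specStep_eq_of_some (len_map_range _ _)
      (by rw [ofNat_encode c]; exact hkn),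
    getD_map_range _ hen] at hmem
  revert hmem
  cases A e <;> decide
end

section
/- There exists a nonempty Π⁰₁ class P of infinite binary sequences containing no computable member such that no member of P is of minimal Turing degree; that is, for every A ∈ P there exists C : ℕ → Bool that is not computable, with C <_T A. -/
namespace SpecialPi01

open Nat.Partrec (Code)
open Nat.Partrec.Code
open Encodable

theorem recIn_of_partrec {O : ℕ → ℕ} {f : ℕ →. ℕ} (h : Nat.Partrec f) : RecursiveInOracle O f := by
  induction h with
  | zero => exact RecursiveInOracle.zero
  | succ => exact RecursiveInOracle.succ
  | left => exact RecursiveInOracle.left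
  | right => exact RecursiveInOracle.right
  | pair _ _ ihf ihg => exact RecursiveInOracle.pair ihf ihg
  | comp _ _ ihf ihg => exact RecursiveInOracle.comp ihf ihg
  | prec _ _ ihf ihg => exact RecursiveInOracle.prec ihf ihg
  | rfind _ ih => exact RecursiveInOracle.rfind ih

theorem recIn_comp_total {O : ℕ → ℕ} {f : ℕ →. ℕ} (hf : RecursiveInOracle O f) {g : ℕ → ℕ}
    (hg : Computable g) : RecursiveInOracle O fun n => f (g n) := by
  have hg' : RecursiveInOracle O ↑g := recIn_of_partrec (Partrec.nat_iff.1 hg)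
  have h := RecursiveInOracle.comp hf hg'
  have heq : (fun n => (g : ℕ →. ℕ) n >>= f) = fun n => f (g n) := funext fun n => by
    show Part.bind (Part.some (g n)) f = _; exact Part.bind_some _ _
  rwa [heq] at h

lemma mem_pairSeq {a b : Part ℕ} {y : ℕ} :
    y ∈ Nat.pair <$> a <*> b ↔ ∃ u ∈ a, ∃ v ∈ b, Nat.pair u v = y := by
  simp [Seq.seq, Part.mem_bind_iff, Part.mem_map_iff]

lemma mem_partBind {α β : Type} {x : Part α} {f : α → Part β} {y : β} :
    y ∈ x >>= f ↔ ∃ a ∈ x, y ∈ f a := Part.mem_bind_iff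

lemma mem_fmap_iff {x : Part ℕ} {g : ℕ → Bool} {b : Bool} :
    b ∈ g <$> x ↔ ∃ a ∈ x, g a = b := by
  rw [show (g <$> x) = Part.map g x from rfl]; exact Part.mem_map_iff _

theorem prefix_rangeMap {O : ℕ → ℕ} {l l' : ℕ} (h : l ≤ l') :
    (List.range l).map O <+: (List.range l').map O := by
  refine List.IsPrefix.map _ ?_
  have : List.range l = (List.range l').take l := by rw [List.take_range, Nat.min_eq_left h]
  rw [this]; exact List.take_prefix _ _

theorem exists_machine {O : ℕ → ℕ} {f : ℕ →. ℕ} (h : RecursiveInOracle O f) :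
    ∃ F : List ℕ → ℕ →. ℕ, Partrec₂ F ∧
      (∀ {ρ ρ' : List ℕ}, ρ <+: ρ' → ∀ {n y : ℕ}, y ∈ F ρ n → y ∈ F ρ' n) ∧
      (∀ n y, y ∈ f n ↔ ∃ l : ℕ, y ∈ F ((List.range l).map O) n) := by
  have cfst : Computable fun p : List ℕ × ℕ => p.1 := Computable.fst
  have csnd : Computable fun p : List ℕ × ℕ => p.2 := Computable.snd
  induction h with
  | zero =>
    refine ⟨fun _ _ => Part.some 0, ?_, ?_, ?_⟩
    · have : Partrec fun _ : List ℕ × ℕ => (Part.some 0 : Part ℕ) := Partrec.const' _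
      exact this
    · intro ρ ρ' _ n y hy; exact hy
    · intro n y; exact ⟨fun hy => ⟨0, hy⟩, fun ⟨l, hy⟩ => hy⟩
  | succ =>
    refine ⟨fun _ n => Part.some n.succ, ?_, ?_, ?_⟩
    · have : Partrec fun p : List ℕ × ℕ => (Part.some p.2.succ : Part ℕ) :=
        (Computable.succ.comp csnd).partrec
      exact this
    · intro ρ ρ' _ n y hy; exact hy
    · intro n y; exact ⟨fun hy => ⟨0, hy⟩, fun ⟨l, hy⟩ => hy⟩
  | left =>
    refine ⟨fun _ n => Part.some n.unpair.1, ?_, ?_, ?_⟩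
    · have h1 : Computable fun p : List ℕ × ℕ => p.2.unpair.1 :=
        ((Primrec.fst.comp Primrec.unpair).comp Primrec.snd).to_comp
      have : Partrec fun p : List ℕ × ℕ => (Part.some p.2.unpair.1 : Part ℕ) := h1.partrec
      exact this
    · intro ρ ρ' _ n y hy; exact hy
    · intro n y; exact ⟨fun hy => ⟨0, hy⟩, fun ⟨l, hy⟩ => hy⟩
  | right =>
    refine ⟨fun _ n => Part.some n.unpair.2, ?_, ?_, ?_⟩
    · have h1 : Computable fun p : List ℕ × ℕ => p.2.unpair.2 :=
        ((Primrec.snd.comp Primrec.unpair).comp Primrec.snd).to_comp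
      have : Partrec fun p : List ℕ × ℕ => (Part.some p.2.unpair.2 : Part ℕ) := h1.partrec
      exact this
    · intro ρ ρ' _ n y hy; exact hy
    · intro n y; exact ⟨fun hy => ⟨0, hy⟩, fun ⟨l, hy⟩ => hy⟩
  | oracle =>
    refine ⟨fun ρ n => Part.ofOption (ρ[n]?), ?_, ?_, ?_⟩
    · have h1 : Computable fun p : List ℕ × ℕ => p.1[p.2]? :=
        Computable.list_getElem?.comp cfst csnd
      have : Partrec fun p : List ℕ × ℕ => Part.ofOption (p.1[p.2]?) :=
        Computable.ofOption h1
      exact this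
    · intro ρ ρ' hpre n y hy
      simp only [Part.mem_ofOption] at hy ⊢
      obtain ⟨t, rfl⟩ := hpre
      rw [List.getElem?_append_left (List.getElem?_eq_some_iff.1 hy).1]
      exact hy
    · intro n y
      constructor
      · intro hy
        have hyO : y = O n := Part.mem_some_iff.1 hy
        refine ⟨n + 1, ?_⟩
        rw [Part.mem_ofOption]
        simp [hyO]
      · rintro ⟨l, hy⟩
        simp only [Part.mem_ofOption] at hy
        have h1 := (List.getElem?_eq_some_iff.1 hy).1
        rw [List.length_map, List.length_range] at h1
        simp [h1] at hy
        exact Part.mem_some_iff.2 hy.symm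
  | pair hf hg ihf ihg =>
    obtain ⟨F₁, hc₁, hm₁, hcor₁⟩ := ihf
    obtain ⟨F₂, hc₂, hm₂, hcor₂⟩ := ihg
    refine ⟨fun ρ n => Nat.pair <$> F₁ ρ n <*> F₂ ρ n, ?_, ?_, ?_⟩
    · have h1 : Partrec fun p : List ℕ × ℕ =>
          (F₁ p.1 p.2).bind fun a => (F₂ p.1 p.2).map (Nat.pair a) := by
        refine Partrec.bind (hc₁.comp cfst csnd) ?_
        have h2 : Partrec fun q : (List ℕ × ℕ) × ℕ => Part.map (Nat.pair q.2) (F₂ q.1.1 q.1.2) :=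
          Partrec.map (hc₂.comp (cfst.comp Computable.fst) (csnd.comp Computable.fst))
            ((Primrec₂.natPair.comp (Primrec.snd.comp Primrec.fst)
              Primrec.snd).to_comp.to₂)
        exact h2
      have heq : (fun p : List ℕ × ℕ => (F₁ p.1 p.2).bind fun a => (F₂ p.1 p.2).map (Nat.pair a))
          = fun p : List ℕ × ℕ => Nat.pair <$> F₁ p.1 p.2 <*> F₂ p.1 p.2 := by
        funext p
        apply Part.ext; intro y
        rw [mem_pairSeq]
        simp [Part.mem_bind_iff, Part.mem_map_iff]
      rw [heq] at h1
      exact h1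
    · intro ρ ρ' hpre n y hy
      rw [show ((fun ρ n => Nat.pair <$> F₁ ρ n <*> F₂ ρ n) ρ n) = Nat.pair <$> F₁ ρ n <*> F₂ ρ n
        from rfl, mem_pairSeq] at hy
      rw [mem_pairSeq]
      obtain ⟨a, ha, b, hb, rfl⟩ := hy
      exact ⟨a, hm₁ hpre ha, b, hm₂ hpre hb, rfl⟩
    · intro n y
      rw [mem_pairSeq]
      constructor
      · rintro ⟨a, ha, b, hb, rfl⟩
        obtain ⟨l₁, ha'⟩ := (hcor₁ n a).1 ha
        obtain ⟨l₂, hb'⟩ := (hcor₂ n b).1 hb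
        refine ⟨max l₁ l₂, ?_⟩
        rw [mem_pairSeq]
        exact ⟨a, hm₁ (prefix_rangeMap (le_max_left _ _)) ha', b,
          hm₂ (prefix_rangeMap (le_max_right _ _)) hb', rfl⟩
      · rintro ⟨l, hy⟩
        rw [mem_pairSeq] at hy
        obtain ⟨a, ha, b, hb, rfl⟩ := hy
        exact ⟨a, (hcor₁ n a).2 ⟨l, ha⟩, b, (hcor₂ n b).2 ⟨l, hb⟩, rfl⟩
  | comp hf hg ihf ihg =>
    obtain ⟨F₁, hc₁, hm₁, hcor₁⟩ := ihf
    obtain ⟨F₂, hc₂, hm₂, hcor₂⟩ := ihg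
    refine ⟨fun ρ n => F₂ ρ n >>= F₁ ρ, ?_, ?_, ?_⟩
    · have h1 : Partrec fun p : List ℕ × ℕ => (F₂ p.1 p.2).bind fun a => F₁ p.1 a := by
        refine Partrec.bind (hc₂.comp cfst csnd) ?_
        exact (hc₁.comp (cfst.comp Computable.fst) Computable.snd).to₂
      exact h1
    · intro ρ ρ' hpre n y hy
      rw [show ((fun ρ n => F₂ ρ n >>= F₁ ρ) ρ n) = F₂ ρ n >>= F₁ ρ from rfl,
        ] at hy
      replace hy := mem_partBind.1 hy
      refine mem_partBind.2 ?_
      obtain ⟨a, ha, hy⟩ := hy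
      exact ⟨a, hm₂ hpre ha, hm₁ hpre hy⟩
    · intro n y
      refine Iff.trans mem_partBind ?_
      constructor
      · rintro ⟨a, ha, hy⟩
        obtain ⟨l₁, ha'⟩ := (hcor₂ n a).1 ha
        obtain ⟨l₂, hy'⟩ := (hcor₁ a y).1 hy
        refine ⟨max l₁ l₂, ?_⟩
        refine mem_partBind.2 ?_
        exact ⟨a, hm₂ (prefix_rangeMap (le_max_left _ _)) ha',
          hm₁ (prefix_rangeMap (le_max_right _ _)) hy'⟩
      · rintro ⟨l, hy⟩
        replace hy := mem_partBind.1 hy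
        obtain ⟨a, ha, hy⟩ := hy
        exact ⟨a, (hcor₂ n a).2 ⟨l, ha⟩, (hcor₁ a y).2 ⟨l, hy⟩⟩
  | prec hf hg ihf ihg =>
    rename_i f₀ g₀
    obtain ⟨F₁, hc₁, hm₁, hcor₁⟩ := ihf
    obtain ⟨F₂, hc₂, hm₂, hcor₂⟩ := ihg
    have hmono : ∀ {ρ ρ' : List ℕ}, ρ <+: ρ' → ∀ a (m : ℕ) (y : ℕ),
        y ∈ (m.rec (F₁ ρ a) (fun k IH => IH.bind fun i =>
          F₂ ρ (Nat.pair a (Nat.pair k i))) : Part ℕ) →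
        y ∈ (m.rec (F₁ ρ' a) (fun k IH => IH.bind fun i =>
          F₂ ρ' (Nat.pair a (Nat.pair k i))) : Part ℕ) := by
      intro ρ ρ' hpre a m
      induction m with
      | zero => exact fun y hy => hm₁ hpre hy
      | succ k ih =>
        intro y hy
        rw [show ((k+1 : ℕ).rec (F₁ ρ a) (fun k IH => IH.bind fun i =>
          F₂ ρ (Nat.pair a (Nat.pair k i))) : Part ℕ) = Part.bind
            ((k : ℕ).rec (F₁ ρ a) (fun k IH => IH.bind fun i =>
              F₂ ρ (Nat.pair a (Nat.pair k i)))) (fun i => F₂ ρ (Nat.pair a (Nat.pair k i)))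
          from rfl] at hy
        rw [show ((k+1 : ℕ).rec (F₁ ρ' a) (fun k IH => IH.bind fun i =>
          F₂ ρ' (Nat.pair a (Nat.pair k i))) : Part ℕ) = Part.bind
            ((k : ℕ).rec (F₁ ρ' a) (fun k IH => IH.bind fun i =>
              F₂ ρ' (Nat.pair a (Nat.pair k i)))) (fun i => F₂ ρ' (Nat.pair a (Nat.pair k i)))
          from rfl]
        rw [Part.mem_bind_iff] at hy ⊢
        obtain ⟨i, hi, hy⟩ := hy
        exact ⟨i, ih i hi, hm₂ hpre hy⟩
    refine ⟨fun ρ x => (x.unpair.2).rec (F₁ ρ x.unpair.1)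
      (fun y IH => IH.bind fun i => F₂ ρ (Nat.pair x.unpair.1 (Nat.pair y i))), ?_, ?_, ?_⟩
    · have hf' : Computable fun p : List ℕ × ℕ => p.2.unpair.2 :=
        ((Primrec.snd.comp Primrec.unpair).comp Primrec.snd).to_comp
      have hg' : Partrec fun p : List ℕ × ℕ => F₁ p.1 p.2.unpair.1 :=
        hc₁.comp cfst (((Primrec.fst.comp Primrec.unpair).comp Primrec.snd).to_comp)
      have hh' : Partrec₂ fun (p : List ℕ × ℕ) (yi : ℕ × ℕ) =>
          F₂ p.1 (Nat.pair p.2.unpair.1 (Nat.pair yi.1 yi.2)) := by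
        have harg : Computable fun q : (List ℕ × ℕ) × ℕ × ℕ =>
            Nat.pair q.1.2.unpair.1 (Nat.pair q.2.1 q.2.2) := by
          refine Primrec.to_comp ?_
          exact Primrec₂.natPair.comp
            ((Primrec.fst.comp Primrec.unpair).comp (Primrec.snd.comp Primrec.fst))
            (Primrec₂.natPair.comp (Primrec.fst.comp Primrec.snd) (Primrec.snd.comp Primrec.snd))
        have h3 : Partrec fun q : (List ℕ × ℕ) × ℕ × ℕ =>
            F₂ q.1.1 (Nat.pair q.1.2.unpair.1 (Nat.pair q.2.1 q.2.2)) :=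
          hc₂.comp (cfst.comp Computable.fst) harg
        exact h3
      have := Partrec.nat_rec (f := fun p : List ℕ × ℕ => p.2.unpair.2)
        (g := fun p : List ℕ × ℕ => F₁ p.1 p.2.unpair.1)
        (h := fun (p : List ℕ × ℕ) (yi : ℕ × ℕ) =>
          F₂ p.1 (Nat.pair p.2.unpair.1 (Nat.pair yi.1 yi.2))) hf' hg' hh'
      exact this
    · intro ρ ρ' hpre x y hy
      exact hmono hpre x.unpair.1 x.unpair.2 y hy
    · intro x y
      have main : ∀ a (m : ℕ) (y : ℕ),
          (y ∈ (m.rec (f₀ a) (fun k IH => IH.bind fun i =>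
              g₀ (Nat.pair a (Nat.pair k i))) : Part ℕ) ↔
            ∃ l, y ∈ (m.rec (F₁ ((List.range l).map O) a)
              (fun k IH => IH.bind fun i =>
                F₂ ((List.range l).map O) (Nat.pair a (Nat.pair k i))) : Part ℕ)) := by
        intro a m
        induction m with
        | zero => exact fun y => hcor₁ a y
        | succ k ih =>
          intro y
          rw [show ((k+1 : ℕ).rec (f₀ a) (fun k IH => IH.bind fun i =>
            g₀ (Nat.pair a (Nat.pair k i))) : Part ℕ) = Part.bind
              ((k : ℕ).rec (f₀ a) (fun k IH => IH.bind fun i =>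
                g₀ (Nat.pair a (Nat.pair k i)))) (fun i => g₀ (Nat.pair a (Nat.pair k i)))
            from rfl]
          constructor
          · intro hy
            rw [Part.mem_bind_iff] at hy
            obtain ⟨i, hi, hy⟩ := hy
            obtain ⟨l₁, hi'⟩ := (ih i).1 hi
            obtain ⟨l₂, hy'⟩ := (hcor₂ _ y).1 hy
            refine ⟨max l₁ l₂, ?_⟩
            rw [show (((k:ℕ)+1).rec (F₁ ((List.range (max l₁ l₂)).map O) a)
              (fun k IH => IH.bind fun i =>
                F₂ ((List.range (max l₁ l₂)).map O) (Nat.pair a (Nat.pair k i))) : Part ℕ)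
              = Part.bind ((k : ℕ).rec (F₁ ((List.range (max l₁ l₂)).map O) a)
                (fun k IH => IH.bind fun i =>
                  F₂ ((List.range (max l₁ l₂)).map O) (Nat.pair a (Nat.pair k i))))
                (fun i => F₂ ((List.range (max l₁ l₂)).map O) (Nat.pair a (Nat.pair k i)))
              from rfl]
            rw [Part.mem_bind_iff]
            refine ⟨i, hmono (prefix_rangeMap (le_max_left _ _)) a k i hi',
              hm₂ (prefix_rangeMap (le_max_right _ _)) hy'⟩
          · rintro ⟨l, hy⟩
            rw [show (((k:ℕ)+1).rec (F₁ ((List.range l).map O) a)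
              (fun k IH => IH.bind fun i =>
                F₂ ((List.range l).map O) (Nat.pair a (Nat.pair k i))) : Part ℕ)
              = Part.bind ((k : ℕ).rec (F₁ ((List.range l).map O) a)
                (fun k IH => IH.bind fun i =>
                  F₂ ((List.range l).map O) (Nat.pair a (Nat.pair k i))))
                (fun i => F₂ ((List.range l).map O) (Nat.pair a (Nat.pair k i)))
              from rfl] at hy
            rw [Part.mem_bind_iff] at hy ⊢
            obtain ⟨i, hi, hy⟩ := hy
            exact ⟨i, (ih i).2 ⟨l, hi⟩, (hcor₂ _ y).2 ⟨l, hy⟩⟩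
      exact main x.unpair.1 x.unpair.2 y
  | rfind hf ihf =>
    rename_i f₀
    obtain ⟨F₁, hc₁, hm₁, hcor₁⟩ := ihf
    refine ⟨fun ρ a => Nat.rfind fun n =>
      Part.map (fun m => decide (m = 0)) (F₁ ρ (Nat.pair a n)), ?_, ?_, ?_⟩
    · have harg : Computable fun q : (List ℕ × ℕ) × ℕ => Nat.pair q.1.2 q.2 :=
        (Primrec₂.natPair.comp (Primrec.snd.comp Primrec.fst) Primrec.snd).to_comp
      have h2 : Partrec fun q : (List ℕ × ℕ) × ℕ =>
          Part.map (fun m => decide (m = 0)) (F₁ q.1.1 (Nat.pair q.1.2 q.2)) := by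
        refine Partrec.map (hc₁.comp (cfst.comp Computable.fst) harg) ?_
        exact ((Primrec.eq.comp (Primrec.snd (β := ℕ)) (Primrec.const 0)).decide.to_comp).to₂
      have h1 : Partrec fun p : List ℕ × ℕ =>
          Nat.rfind fun n => Part.map (fun m => decide (m = 0)) (F₁ p.1 (Nat.pair p.2 n)) :=
        Partrec.rfind h2
      exact h1
    · intro ρ ρ' hpre a y hy
      have hy' : y ∈ Nat.rfind fun n =>
          Part.map (fun m => decide (m = 0)) (F₁ ρ (Nat.pair a n)) := hy
      replace hy' := Nat.mem_rfind.1 hy'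
      refine Nat.mem_rfind.2 ?_
      obtain ⟨h0, hlt⟩ := hy'
      constructor
      · obtain ⟨v, hv, hv0⟩ := (Part.mem_map_iff _).1 h0
        exact (Part.mem_map_iff _).2 ⟨v, hm₁ hpre hv, hv0⟩
      · intro m hm
        obtain ⟨v, hv, hv0⟩ := (Part.mem_map_iff _).1 (hlt hm)
        exact (Part.mem_map_iff _).2 ⟨v, hm₁ hpre hv, hv0⟩
    · intro a y
      have hsrc : (y ∈ Nat.rfind fun n => (fun m => m = 0) <$> f₀ (Nat.pair a n)) ↔
          (true ∈ (fun m => decide (m = 0)) <$> f₀ (Nat.pair a y) ∧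
            ∀ {m : ℕ}, m < y → false ∈ (fun m => decide (m = 0)) <$> f₀ (Nat.pair a m)) :=
        Nat.mem_rfind
      rw [hsrc]
      constructor
      · rintro ⟨h0, hlt⟩
        obtain ⟨v, hv, hv0⟩ := mem_fmap_iff.1 h0
        have H : ∀ k, k ≤ y → ∃ l w, w ∈ F₁ ((List.range l).map O) (Nat.pair a k) ∧
            w ∈ f₀ (Nat.pair a k) := by
          intro k hk
          rcases Nat.lt_or_ge k y with hk' | hk'
          · obtain ⟨w, hw, _⟩ := mem_fmap_iff.1 (hlt hk')
            obtain ⟨l, hw'⟩ := (hcor₁ _ w).1 hw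
            exact ⟨l, w, hw', hw⟩
          · have hky : k = y := le_antisymm hk hk'
            subst hky
            obtain ⟨l, hv'⟩ := (hcor₁ _ v).1 hv
            exact ⟨l, v, hv', hv⟩
        choose lf wf hw1 hw2 using H
        set L : ℕ := (Finset.range (y + 1)).sup fun k =>
          if h : k ≤ y then lf k h else 0 with hL
        have hLk : ∀ k (hk : k ≤ y), lf k hk ≤ L := by
          intro k hk
          have hmem : k ∈ Finset.range (y + 1) := Finset.mem_range.2 (Nat.lt_succ_of_le hk)
          have := Finset.le_sup (f := fun k => if h : k ≤ y then lf k h else 0) hmem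
          simpa [hk] using this
        refine ⟨L, ?_⟩
        refine Nat.mem_rfind.2 ?_
        constructor
        · refine (Part.mem_map_iff _).2 ⟨wf y le_rfl,
            hm₁ (prefix_rangeMap (hLk y le_rfl)) (hw1 y le_rfl), ?_⟩
          have hwv : wf y le_rfl = v := Part.mem_unique (hw2 y le_rfl) hv
          rw [hwv]; exact hv0
        · intro m hm
          have hle := le_of_lt hm
          refine (Part.mem_map_iff _).2 ⟨wf m hle,
            hm₁ (prefix_rangeMap (hLk m hle)) (hw1 m hle), ?_⟩
          obtain ⟨w', hw', hfalse⟩ := mem_fmap_iff.1 (hlt hm)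
          have hww : wf m hle = w' := Part.mem_unique (hw2 m hle) hw'
          rw [hww]; exact hfalse
      · rintro ⟨l, hy⟩
        replace hy := Nat.mem_rfind.1 hy
        obtain ⟨h0, hlt⟩ := hy
        constructor
        · obtain ⟨v, hv, hv0⟩ := (Part.mem_map_iff _).1 h0
          exact mem_fmap_iff.2 ⟨v, (hcor₁ _ v).2 ⟨l, hv⟩, hv0⟩
        · intro m hm
          obtain ⟨v, hv, hv0⟩ := (Part.mem_map_iff _).1 (hlt hm)
          exact mem_fmap_iff.2 ⟨v, (hcor₁ _ v).2 ⟨l, hv⟩, hv0⟩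

theorem exists_code_machine {O : ℕ → ℕ} {f : ℕ →. ℕ} (h : RecursiveInOracle O f) :
    ∃ c : Nat.Partrec.Code,
      (∀ {ρ ρ' : List ℕ}, ρ <+: ρ' → ∀ {n y : ℕ},
        y ∈ eval c (Nat.pair (encode ρ) n) → y ∈ eval c (Nat.pair (encode ρ') n)) ∧
      (∀ n y, y ∈ f n ↔ ∃ l : ℕ,
        y ∈ eval c (Nat.pair (encode ((List.range l).map O)) n)) := by
  obtain ⟨F, hFc, hFm, hFcor⟩ := exists_machine h
  have hG : Partrec fun x : ℕ =>
      F ((Encodable.decode (α := List ℕ) x.unpair.1).getD []) x.unpair.2 := by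
    refine hFc.comp ?_ (((Primrec.snd.comp Primrec.unpair).to_comp))
    exact (Primrec.option_getD.to_comp).comp
      (Computable.decode.comp ((Primrec.fst.comp Primrec.unpair).to_comp))
      (Computable.const [])
  obtain ⟨c, hc⟩ := exists_code.1 (Partrec.nat_iff.1 hG)
  have key : ∀ (ρ : List ℕ) (n : ℕ), eval c (Nat.pair (encode ρ) n) = F ρ n := by
    intro ρ n
    rw [hc]
    simp [Nat.unpair_pair, encodek]
  refine ⟨c, ?_, ?_⟩
  · intro ρ ρ' hpre n y hy
    rw [key] at hy ⊢
    exact hFm hpre hy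
  · intro n y
    rw [hFcor n y]
    constructor
    · rintro ⟨l, hl⟩; exact ⟨l, by rw [key]; exact hl⟩
    · rintro ⟨l, hl⟩; rw [key] at hl; exact ⟨l, hl⟩

end SpecialPi01
namespace SpecialPi01

/-! ### The tree -/

def mm (i : ℕ) : ℕ := i + 3

def cd (i : ℕ) : Nat.Partrec.Code := Denumerable.ofNat Nat.Partrec.Code (i / 2)

def olen (i t : ℕ) : ℕ := if i % 2 = 1 then (t + 1) / 2 else t

def oval (i : ℕ) (σ : List Bool) (n : ℕ) : ℕ :=
  if i % 2 = 1 then (σ.getD (2 * n) false).toNat else 0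

def ostr (i : ℕ) (σ : List Bool) (l : ℕ) : List ℕ :=
  (List.range (min l (olen i σ.length))).map (oval i σ)

def convB (i : ℕ) (σ : List Bool) (p : ℕ) : Bool :=
  (List.range (mm i)).all fun n =>
    (Nat.Partrec.Code.evaln p.unpair.1 (cd i)
      (Nat.pair (Encodable.encode (ostr i σ p.unpair.2)) n)).isSome

def matchB (i : ℕ) (σ : List Bool) (p : ℕ) : Bool :=
  (List.range (mm i)).all fun n =>
    decide (Nat.Partrec.Code.evaln p.unpair.1 (cd i)
      (Nat.pair (Encodable.encode (ostr i σ p.unpair.2)) n)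
      = some ((σ.getD (2 * n + i % 2) false).toNat))

def least (p : ℕ → Bool) (N : ℕ) : Option ℕ :=
  N.rec none fun n acc => Option.casesOn acc (if p n then some n else none) some

lemma least_succ {p : ℕ → Bool} {n : ℕ} :
    least p (n + 1) = Option.casesOn (least p n) (if p n then some n else none) some := rfl

lemma list_all_congr {α : Type} {l : List α} {f g : α → Bool}
    (h : ∀ x ∈ l, f x = g x) : l.all f = l.all g := by
  induction l with
  | nil => rfl
  | cons a l ih =>
    simp only [List.all_cons]
    rw [h a List.mem_cons_self, ih (fun x hx => h x (List.mem_cons_of_mem a hx))]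

lemma least_eq_some {p : ℕ → Bool} {N : ℕ} : ∀ {j : ℕ},
    least p N = some j ↔ j < N ∧ p j = true ∧ ∀ q < j, p q = false := by
  induction N with
  | zero =>
    intro j
    constructor
    · intro h; exact absurd h (by simp [least])
    · rintro ⟨h, _⟩; omega
  | succ n ih =>
    intro j
    rcases h : least p n with _ | j'
    · have hnone : ∀ q < n, p q = false := by
        intro q hq
        cases hpq : p q
        · rfl
        · exfalso
          have hex' : ∃ q, p q = true := ⟨q, hpq⟩
          have hq1p : p (Nat.find hex') = true := Nat.find_spec hex'
          have hq1min : ∀ r < Nat.find hex', p r = false := by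
            intro r hr
            cases hpr : p r
            · rfl
            · exact absurd hpr (Nat.find_min hex' hr)
          have hq1lt : Nat.find hex' < n := lt_of_le_of_lt (Nat.find_min' hex' hpq) hq
          have h2 : least p n = some (Nat.find hex') := ih.2 ⟨hq1lt, hq1p, hq1min⟩
          rw [h2] at h
          exact absurd h (by simp)
      have hstep : least p (n + 1) = if p n then some n else none := by
        rw [least_succ, h]
      rw [hstep]
      constructor
      · intro hj
        by_cases hp : p n = true
        · rw [if_pos hp] at hj
          cases hj
          exact ⟨Nat.lt_succ_self n, hp, hnone⟩
        · rw [if_neg hp] at hj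
          exact absurd hj (by simp)
      · rintro ⟨hjn, hpj, hmin⟩
        have hj_n : j = n := by
          rcases Nat.lt_succ_iff_lt_or_eq.1 hjn with h' | h'
          · exact absurd hpj (by rw [hnone j h']; simp)
          · exact h'
        subst hj_n
        rw [if_pos hpj]
    · have hstep : least p (n + 1) = some j' := by rw [least_succ, h]
      rw [hstep]
      rw [ih] at h
      obtain ⟨hj'n, hpj', hmin'⟩ := h
      constructor
      · intro hj
        cases hj
        exact ⟨Nat.lt_succ_of_lt hj'n, hpj', hmin'⟩
      · rintro ⟨hjn, hpj, hmin⟩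
        have hjj : j = j' := by
          rcases Nat.lt_trichotomy j j' with h' | h' | h'
          · exact absurd hpj (by rw [hmin' j h']; simp)
          · exact h'
          · exact absurd hpj' (by rw [hmin j' h']; simp)
        rw [hjj]

def leastConv (i : ℕ) (σ : List Bool) : Option ℕ :=
  least (convB i σ) (olen i σ.length + 1)

def badB (i : ℕ) (σ : List Bool) : Bool :=
  decide (2 * mm i ≤ σ.length) &&
    (Option.casesOn (leastConv i σ) false (fun p => matchB i σ p))

def TB (σ : List Bool) : Bool := (List.range σ.length).all fun i => ! badB i σ

lemma bad_iff {i : ℕ} {σ : List Bool} :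
    badB i σ = true ↔ 2 * mm i ≤ σ.length ∧
      ∃ p, p ≤ olen i σ.length ∧ convB i σ p = true ∧
        (∀ q < p, convB i σ q = false) ∧ matchB i σ p = true := by
  rw [badB, Bool.and_eq_true, decide_eq_true_iff]
  constructor
  · rintro ⟨h1, h2⟩
    rcases h : leastConv i σ with _ | p
    · rw [h] at h2; exact absurd h2 (by simp)
    · rw [h] at h2
      obtain ⟨hlt, hc, hmin⟩ := least_eq_some.1 h
      exact ⟨h1, p, Nat.lt_succ_iff.1 hlt, hc, hmin, h2⟩
  · rintro ⟨h1, p, hple, hc, hmin, hm⟩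
    refine ⟨h1, ?_⟩
    have : leastConv i σ = some p :=
      least_eq_some.2 ⟨Nat.lt_succ_of_le hple, hc, hmin⟩
    rw [this]
    exact hm

lemma TB_iff {σ : List Bool} : TB σ = true ↔ ∀ i < σ.length, badB i σ = false := by
  rw [TB, List.all_eq_true]
  constructor
  · intro h i hi
    have := h i (List.mem_range.2 hi)
    cases hb : badB i σ
    · rfl
    · rw [hb] at this; exact absurd this (by simp)
  · intro h i hi
    rw [h i (List.mem_range.1 hi)]
    rfl

/-! ### Stability under extension -/

lemma prefix_getD {τ σ : List Bool} (h : τ <+: σ) {k : ℕ} (hk : k < τ.length) (d : Bool) :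
    σ.getD k d = τ.getD k d := by
  obtain ⟨t, rfl⟩ := h
  rw [List.getD_eq_getElem?_getD, List.getD_eq_getElem?_getD, List.getElem?_append_left hk]

lemma olen_mono {i : ℕ} {t t' : ℕ} (h : t ≤ t') : olen i t ≤ olen i t' := by
  unfold olen
  split
  · omega
  · exact h

lemma ostr_stable {i : ℕ} {τ σ : List Bool} (h : τ <+: σ) {l : ℕ}
    (hl : l ≤ olen i τ.length) : ostr i σ l = ostr i τ l := by
  unfold ostr
  have h1 : min l (olen i σ.length) = l :=
    Nat.min_eq_left (le_trans hl (olen_mono h.length_le))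
  have h2 : min l (olen i τ.length) = l := Nat.min_eq_left hl
  rw [h1, h2]
  apply List.map_congr_left
  intro n hn
  rw [List.mem_range] at hn
  unfold oval
  split
  · rename_i hpar
    have h2n : 2 * n < τ.length := by
      have : l ≤ (τ.length + 1) / 2 := by
        rw [olen, if_pos hpar] at hl; exact hl
      omega
    rw [prefix_getD h h2n]
  · rfl

lemma conv_stable {i : ℕ} {τ σ : List Bool} (h : τ <+: σ) {p : ℕ}
    (hp : p ≤ olen i τ.length) : convB i σ p = convB i τ p := by
  unfold convB
  rw [ostr_stable h (le_trans (Nat.unpair_right_le p) hp)]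

lemma match_stable {i : ℕ} {τ σ : List Bool} (h : τ <+: σ) {p : ℕ}
    (hp : p ≤ olen i τ.length) (hlen : 2 * mm i ≤ τ.length) :
    matchB i σ p = matchB i τ p := by
  unfold matchB
  rw [ostr_stable h (le_trans (Nat.unpair_right_le p) hp)]
  apply list_all_congr
  intro n hn
  rw [List.mem_range] at hn
  have hmod : i % 2 < 2 := Nat.mod_lt i (by norm_num)
  have hk : 2 * n + i % 2 < τ.length := by
    unfold mm at hlen hn; omega
  rw [prefix_getD h hk]

lemma bad_mono {i : ℕ} {τ σ : List Bool} (h : τ <+: σ) (hb : badB i τ = true) :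
    badB i σ = true := by
  obtain ⟨h1, p, hple, hc, hmin, hm⟩ := bad_iff.1 hb
  refine bad_iff.2 ⟨le_trans h1 h.length_le, p, le_trans hple (olen_mono h.length_le), ?_, ?_, ?_⟩
  · rw [conv_stable h hple]; exact hc
  · intro q hq
    rw [conv_stable h (le_trans (le_of_lt hq) hple)]
    exact hmin q hq
  · rw [match_stable h hple h1]; exact hm

lemma TB_mono {τ σ : List Bool} (h : τ <+: σ) (hT : TB σ = true) : TB τ = true := by
  rw [TB_iff] at hT ⊢
  intro i hi
  cases hb : badB i τ
  · rfl
  · have := bad_mono h hb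
    rw [hT i (lt_of_lt_of_le hi h.length_le)] at this
    exact absurd this (by simp)

end SpecialPi01
namespace SpecialPi01

open Nat.Partrec (Code)
open Nat.Partrec.Code

lemma primrec_all {α β : Type} [Primcodable α] [Primcodable β] {f : α → List β}
    {p : α → β → Bool} (hf : Primrec f) (hp : Primrec₂ p) :
    Primrec fun a => (f a).all (p a) := by
  have hfold := Primrec.list_foldr (h := fun (a : α) (bs : β × Bool) => p a bs.1 && bs.2)
    hf (Primrec.const true)
    ((Primrec.and.comp (hp.comp Primrec.fst (Primrec.fst.comp Primrec.snd))
      (Primrec.snd.comp Primrec.snd)).to₂)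
  refine hfold.of_eq fun a => ?_
  generalize f a = l
  induction l with
  | nil => rfl
  | cons b l ih => simp [List.all_cons, List.foldr, ← ih]

lemma primrec_mm : Primrec mm := by
  have : Primrec fun i : ℕ => i + 3 := Primrec.nat_add.comp Primrec.id (Primrec.const 3)
  exact this

lemma primrec_cd : Primrec cd :=
  (Primrec.ofNat Code).comp (Primrec.nat_div.comp Primrec.id (Primrec.const 2))

lemma primrec_olen : Primrec₂ olen := by
  have : Primrec fun x : ℕ × ℕ => if x.1 % 2 = 1 then (x.2 + 1) / 2 else x.2 := by
    refine Primrec.ite ?_ ?_ ?_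
    · exact Primrec.eq.comp (Primrec.nat_mod.comp Primrec.fst (Primrec.const 2))
        (Primrec.const 1)
    · exact Primrec.nat_div.comp (Primrec.succ.comp Primrec.snd) (Primrec.const 2)
    · exact Primrec.snd
  exact this

lemma primrec_ostr : Primrec₂ fun (x : ℕ × List Bool) (l : ℕ) => ostr x.1 x.2 l := by
  have hrange : Primrec fun q : (ℕ × List Bool) × ℕ =>
      List.range (min q.2 (olen q.1.1 q.1.2.length)) :=
    Primrec.list_range.comp (Primrec.nat_min.comp Primrec.snd
      (primrec_olen.comp (Primrec.fst.comp Primrec.fst)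
        (Primrec.list_length.comp (Primrec.snd.comp Primrec.fst))))
  have hval : Primrec₂ fun (q : (ℕ × List Bool) × ℕ) (n : ℕ) => oval q.1.1 q.1.2 n := by
    have : Primrec fun w : ((ℕ × List Bool) × ℕ) × ℕ =>
        if w.1.1.1 % 2 = 1 then (w.1.1.2.getD (2 * w.2) false).toNat else 0 := by
      refine Primrec.ite ?_ ?_ ?_
      · exact Primrec.eq.comp (Primrec.nat_mod.comp
          (Primrec.fst.comp (Primrec.fst.comp Primrec.fst)) (Primrec.const 2))
          (Primrec.const 1)
      · refine (Primrec.dom_bool Bool.toNat).comp ?_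
        exact (Primrec.list_getD false).comp
          (Primrec.snd.comp (Primrec.fst.comp Primrec.fst))
          (Primrec.nat_mul.comp (Primrec.const 2) Primrec.snd)
      · exact Primrec.const 0
    exact this
  have : Primrec fun q : (ℕ × List Bool) × ℕ =>
      (List.range (min q.2 (olen q.1.1 q.1.2.length))).map (oval q.1.1 q.1.2) :=
    Primrec.list_map hrange hval
  exact this

lemma primrec_convB : Primrec₂ fun (x : ℕ × List Bool) (p : ℕ) => convB x.1 x.2 p := by
  have hrange : Primrec fun q : (ℕ × List Bool) × ℕ => List.range (mm q.1.1) :=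
    Primrec.list_range.comp (primrec_mm.comp (Primrec.fst.comp Primrec.fst))
  have hpred : Primrec₂ fun (q : (ℕ × List Bool) × ℕ) (n : ℕ) =>
      (evaln q.2.unpair.1 (cd q.1.1)
        (Nat.pair (Encodable.encode (ostr q.1.1 q.1.2 q.2.unpair.2)) n)).isSome := by
    have harg : Primrec fun w : ((ℕ × List Bool) × ℕ) × ℕ =>
        ((w.1.2.unpair.1, cd w.1.1.1),
          Nat.pair (Encodable.encode (ostr w.1.1.1 w.1.1.2 w.1.2.unpair.2)) w.2) := by
      refine Primrec.pair (Primrec.pair ?_ ?_) ?_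
      · exact (Primrec.fst.comp Primrec.unpair).comp (Primrec.snd.comp Primrec.fst)
      · exact primrec_cd.comp (Primrec.fst.comp (Primrec.fst.comp Primrec.fst))
      · refine Primrec₂.natPair.comp ?_ Primrec.snd
        refine Primrec.encode.comp ?_
        exact primrec_ostr.comp (Primrec.fst.comp Primrec.fst)
          ((Primrec.snd.comp Primrec.unpair).comp (Primrec.snd.comp Primrec.fst))
    exact (Primrec.option_isSome.comp (primrec_evaln.comp harg)).to₂
  exact primrec_all hrange hpred

lemma primrec_matchB : Primrec₂ fun (x : ℕ × List Bool) (p : ℕ) => matchB x.1 x.2 p := by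
  have hrange : Primrec fun q : (ℕ × List Bool) × ℕ => List.range (mm q.1.1) :=
    Primrec.list_range.comp (primrec_mm.comp (Primrec.fst.comp Primrec.fst))
  have hpred : Primrec₂ fun (q : (ℕ × List Bool) × ℕ) (n : ℕ) =>
      decide ((evaln q.2.unpair.1 (cd q.1.1)
        (Nat.pair (Encodable.encode (ostr q.1.1 q.1.2 q.2.unpair.2)) n))
        = some ((q.1.2.getD (2 * n + q.1.1 % 2) false).toNat)) := by
    have hev : Primrec fun w : ((ℕ × List Bool) × ℕ) × ℕ =>
        evaln w.1.2.unpair.1 (cd w.1.1.1)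
          (Nat.pair (Encodable.encode (ostr w.1.1.1 w.1.1.2 w.1.2.unpair.2)) w.2) := by
      have harg : Primrec fun w : ((ℕ × List Bool) × ℕ) × ℕ =>
          ((w.1.2.unpair.1, cd w.1.1.1),
            Nat.pair (Encodable.encode (ostr w.1.1.1 w.1.1.2 w.1.2.unpair.2)) w.2) := by
        refine Primrec.pair (Primrec.pair ?_ ?_) ?_
        · exact (Primrec.fst.comp Primrec.unpair).comp (Primrec.snd.comp Primrec.fst)
        · exact primrec_cd.comp (Primrec.fst.comp (Primrec.fst.comp Primrec.fst))
        · refine Primrec₂.natPair.comp ?_ Primrec.snd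
          refine Primrec.encode.comp ?_
          exact primrec_ostr.comp (Primrec.fst.comp Primrec.fst)
            ((Primrec.snd.comp Primrec.unpair).comp (Primrec.snd.comp Primrec.fst))
      exact primrec_evaln.comp harg
    have hsome : Primrec fun w : ((ℕ × List Bool) × ℕ) × ℕ =>
        (some ((w.1.1.2.getD (2 * w.2 + w.1.1.1 % 2) false).toNat) : Option ℕ) := by
      refine Primrec.option_some.comp ?_
      refine (Primrec.dom_bool Bool.toNat).comp ?_
      refine (Primrec.list_getD false).comp
        (Primrec.snd.comp (Primrec.fst.comp Primrec.fst)) ?_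
      refine Primrec.nat_add.comp
        (Primrec.nat_mul.comp (Primrec.const 2) Primrec.snd) ?_
      exact Primrec.nat_mod.comp (Primrec.fst.comp (Primrec.fst.comp Primrec.fst))
        (Primrec.const 2)
    exact (Primrec.eq.comp hev hsome).decide.to₂
  exact primrec_all hrange hpred

lemma primrec_leastConv : Primrec₂ fun (i : ℕ) (σ : List Bool) => leastConv i σ := by
  have hrec := Primrec.nat_rec' (f := fun x : ℕ × List Bool => olen x.1 x.2.length + 1)
    (g := fun _ : ℕ × List Bool => (none : Option ℕ))
    (h := fun (x : ℕ × List Bool) (q : ℕ × Option ℕ) =>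
      Option.casesOn q.2 (if convB x.1 x.2 q.1 then some q.1 else none) some)
    (Primrec.succ.comp (primrec_olen.comp Primrec.fst
      (Primrec.list_length.comp Primrec.snd)))
    (Primrec.const (none : Option ℕ))
    ?_
  · exact hrec.of_eq fun x => rfl
  · have hstep : Primrec fun w : (ℕ × List Bool) × ℕ × Option ℕ =>
        (Option.casesOn w.2.2
          (if convB w.1.1 w.1.2 w.2.1 then some w.2.1 else none) some : Option ℕ) := by
      refine Primrec.option_casesOn (Primrec.snd.comp Primrec.snd) ?_ ?_
      · refine Primrec.ite ?_ ?_ ?_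
        · exact Primrec.eq.comp (primrec_convB.comp (Primrec.fst (β := ℕ × Option ℕ))
            (Primrec.fst.comp Primrec.snd)) (Primrec.const true)
        · exact Primrec.option_some.comp (Primrec.fst.comp Primrec.snd)
        · exact Primrec.const (none : Option ℕ)
      · exact (Primrec.option_some.comp Primrec.snd).to₂
    exact hstep

lemma primrec_badB : Primrec₂ fun (i : ℕ) (σ : List Bool) => badB i σ := by
  have h1 : Primrec fun x : ℕ × List Bool => decide (2 * mm x.1 ≤ x.2.length) :=
    (Primrec.nat_le.comp (Primrec.nat_mul.comp (Primrec.const 2)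
      (primrec_mm.comp Primrec.fst)) (Primrec.list_length.comp Primrec.snd)).decide
  have h2 : Primrec fun x : ℕ × List Bool =>
      (Option.casesOn (leastConv x.1 x.2) false (fun p => matchB x.1 x.2 p) : Bool) := by
    refine Primrec.option_casesOn (primrec_leastConv.comp Primrec.fst Primrec.snd)
      (Primrec.const false) ?_
    exact (primrec_matchB.comp Primrec.fst Primrec.snd).to₂
  have : Primrec fun x : ℕ × List Bool =>
      decide (2 * mm x.1 ≤ x.2.length) &&
        (Option.casesOn (leastConv x.1 x.2) false (fun p => matchB x.1 x.2 p) : Bool) :=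
    Primrec.and.comp h1 h2
  exact this

theorem computable_TB : Computable TB := by
  have h : Primrec TB := by
    have hrange : Primrec fun σ : List Bool => List.range σ.length :=
      Primrec.list_range.comp Primrec.list_length
    have hpred : Primrec₂ fun (σ : List Bool) (i : ℕ) => ! badB i σ :=
      (Primrec.not.comp (primrec_badB.comp Primrec.snd Primrec.fst)).to₂
    exact primrec_all hrange hpred
  exact h.to_comp

end SpecialPi01
namespace SpecialPi01

def allStrings (L : ℕ) : Finset (List Bool) :=
  Finset.image (fun v : Fin L → Bool => List.ofFn v) Finset.univ

lemma mem_allStrings {L : ℕ} {σ : List Bool} : σ ∈ allStrings L ↔ σ.length = L := by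
  constructor
  · intro h
    obtain ⟨v, _, rfl⟩ := Finset.mem_image.1 h
    exact List.length_ofFn
  · intro h
    refine Finset.mem_image.2 ⟨fun j => σ.get (Fin.cast h.symm j), Finset.mem_univ _, ?_⟩
    apply List.ext_get
    · simp [h]
    · intro k h1 h2
      simp [List.get_ofFn]

lemma card_allStrings (L : ℕ) : (allStrings L).card = 2 ^ L := by
  rw [allStrings, Finset.card_image_of_injective _ (List.ofFn_injective), Finset.card_univ]
  simp [Fintype.card_fun]

lemma path_getD {α : Type} {A : ℕ → α} {t k : ℕ} (h : k < t) (d : α) :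
    (((List.range t).map A).getD k d) = A k := by
  rw [List.getD_eq_getElem?_getD]
  rw [List.getElem?_map, List.getElem?_range h]
  rfl

lemma badB_card_le (i L : ℕ) :
    ((allStrings L).filter (fun σ => badB i σ = true)).card ≤
      if 2 * mm i ≤ L then 2 ^ (L - mm i) else 0 := by
  by_cases h2m : 2 * mm i ≤ L
  · rw [if_pos h2m]
    set m := mm i with hm
    set b := i % 2 with hb
    have hb1 : b ≤ 1 := Nat.lt_succ_iff.1 (Nat.mod_lt i (by norm_num))
    set g : ℕ → ℕ := fun j => if j < m then 2 * j + (1 - b) else j + m with hg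
    have hcard2 : (Finset.univ : Finset (Fin (L - m) → Bool)).card = 2 ^ (L - m) := by
      rw [Finset.card_univ]; simp [Fintype.card_fun]
    rw [← hcard2]
    refine Finset.card_le_card_of_injOn (fun σ => fun j : Fin (L - m) => σ.getD (g j.val) false)
      (fun _ _ => Finset.mem_univ _) ?_
    intro σ hσ σ' hσ' heq
    rw [Finset.coe_filter] at hσ hσ'
    obtain ⟨hσA, hσbad⟩ := hσ
    obtain ⟨hσA', hσbad'⟩ := hσ'
    have hlen : σ.length = L := mem_allStrings.1 hσA
    have hlen' : σ'.length = L := mem_allStrings.1 hσA'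
    -- agreement off determined positions
    have hagree : ∀ k, k < L → (2 * m ≤ k ∨ k % 2 ≠ b) → σ.getD k false = σ'.getD k false := by
      intro k hkL hk
      rcases hk with hk | hk
      · have hj : k - m < L - m := by omega
        have := congrFun heq ⟨k - m, hj⟩
        simpa [hg, show ¬ (k - m < m) by omega, show k - m + m = k by omega] using this
      · have hkm : k < 2 * m ∨ 2 * m ≤ k := by omega
        rcases hkm with hkm | hkm
        · have hj : k / 2 < L - m := by omega
          have := congrFun heq ⟨k / 2, hj⟩
          have hgk : g (k / 2) = k := by
            rw [hg]
            simp only [show k / 2 < m by omega, if_pos]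
            omega
          simpa [hgk] using this
        · have hj : k - m < L - m := by omega
          have := congrFun heq ⟨k - m, hj⟩
          simpa [hg, show ¬ (k - m < m) by omega, show k - m + m = k by omega] using this
    -- the orc-strings agree
    have hostr : ∀ l, ostr i σ l = ostr i σ' l := by
      intro l
      unfold ostr
      rw [hlen, hlen']
      apply List.map_congr_left
      intro n hn
      rw [List.mem_range] at hn
      unfold oval
      split
      · rename_i hpar
        have hb1' : b = 1 := by rw [hb]; exact hpar
        have h2n : 2 * n < L := by
          have : n < (L + 1) / 2 := by
            have := Nat.lt_of_lt_of_le hn (Nat.min_le_right _ _)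
            rw [olen, if_pos hpar] at this
            exact this
          omega
        rw [hagree (2 * n) h2n (Or.inr (by omega))]
      · rfl
    have hconv : ∀ p, convB i σ p = convB i σ' p := by
      intro p
      unfold convB
      rw [hostr]
    have hleast : leastConv i σ = leastConv i σ' := by
      have hcf : convB i σ = convB i σ' := funext hconv
      unfold leastConv
      rw [hlen, hlen', hcf]
    -- both bad: extract the common least p and the match conditions
    obtain ⟨hL1, p, hple, hcv, hmin, hmt⟩ := bad_iff.1 hσbad
    obtain ⟨hL1', p', hple', hcv', hmin', hmt'⟩ := bad_iff.1 hσbad'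
    have hpp' : p = p' := by
      have e1 : leastConv i σ = some p :=
        least_eq_some.2 ⟨Nat.lt_succ_of_le hple, hcv, hmin⟩
      have e2 : leastConv i σ' = some p' :=
        least_eq_some.2 ⟨Nat.lt_succ_of_le hple', hcv', hmin'⟩
      rw [hleast] at e1
      rw [e1] at e2
      exact (Option.some.injEq _ _ ▸ e2)
    subst hpp'
    -- determined positions
    have hdet : ∀ n, n < m → σ.getD (2 * n + b) false = σ'.getD (2 * n + b) false := by
      intro n hn
      have h1 := (List.all_eq_true.1 hmt) n (List.mem_range.2 hn)
      have h2 := (List.all_eq_true.1 hmt') n (List.mem_range.2 hn)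
      rw [decide_eq_true_iff] at h1 h2
      rw [hostr] at h1
      rw [h1] at h2
      have := Option.some.injEq _ _ ▸ h2
      cases hx : σ.getD (2 * n + b) false <;> cases hx' : σ'.getD (2 * n + b) false <;>
        rw [hx, hx'] at this <;> simp_all
    -- conclude σ = σ'
    apply List.ext_getElem (by rw [hlen, hlen'])
    intro k hk1 hk2
    have hkL : k < L := by rw [← hlen]; exact hk1
    have hgetD : σ.getD k false = σ'.getD k false := by
      by_cases hkb : k % 2 = b ∧ k < 2 * m
      · obtain ⟨hkb1, hkb2⟩ := hkb
        have : k = 2 * (k / 2) + b := by omega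
        rw [this]
        exact hdet (k / 2) (by omega)
      · rcases Nat.lt_or_ge k (2 * m) with hk' | hk'
        · exact hagree k hkL (Or.inr (by tauto))
        · exact hagree k hkL (Or.inl hk')
    rw [List.getD_eq_getElem?_getD, List.getD_eq_getElem?_getD] at hgetD
    rw [List.getElem?_eq_getElem hk1, List.getElem?_eq_getElem hk2] at hgetD
    simpa using hgetD
  · rw [if_neg h2m]
    rw [Nat.le_zero, Finset.card_eq_zero, Finset.filter_eq_empty_iff]
    intro σ hσ
    intro hbad
    obtain ⟨hL1, _⟩ := bad_iff.1 hbad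
    rw [mem_allStrings.1 hσ] at hL1
    exact h2m hL1

lemma sum_two_pow (n : ℕ) : (Finset.range n).sum (fun j => 2 ^ j) = 2 ^ n - 1 := by
  induction n with
  | zero => rfl
  | succ n ih =>
    rw [Finset.sum_range_succ, ih]
    have : 1 ≤ 2 ^ n := Nat.one_le_two_pow
    have h2 : (2:ℕ) ^ (n+1) = 2 ^ n + 2 ^ n := by ring
    omega

lemma exists_good (L : ℕ) : ∃ σ : List Bool, σ.length = L ∧ TB σ = true := by
  by_contra hcon
  push_neg at hcon
  have hcover : allStrings L ⊆ (Finset.range L).biUnion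
      (fun i => (allStrings L).filter (fun σ => badB i σ = true)) := by
    intro σ hσ
    have hlen := mem_allStrings.1 hσ
    have hT := hcon σ hlen
    have : ¬ (∀ i < σ.length, badB i σ = false) := by
      intro h
      exact hT (TB_iff.2 h)
    push_neg at this
    obtain ⟨i, hi, hbad⟩ := this
    refine Finset.mem_biUnion.2 ⟨i, Finset.mem_range.2 (by rw [← hlen]; exact hi), ?_⟩
    refine Finset.mem_filter.2 ⟨hσ, ?_⟩
    cases h : badB i σ
    · exact absurd h hbad
    · rfl
  have hcard := Finset.card_le_card hcover
  have hcard2 := Finset.card_biUnion_le (s := Finset.range L)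
    (t := fun i => (allStrings L).filter (fun σ => badB i σ = true))
  have hsum : ((Finset.range L).sum fun i =>
      ((allStrings L).filter (fun σ => badB i σ = true)).card) ≤
      (Finset.range L).sum (fun i => if 2 * mm i ≤ L then 2 ^ (L - mm i) else 0) :=
    Finset.sum_le_sum fun i _ => badB_card_le i L
  have hbound : (Finset.range L).sum (fun i => if 2 * mm i ≤ L then 2 ^ (L - mm i) else 0)
      < 2 ^ L := by
    have hstep1 : ∀ i ∈ Finset.range L,
        (if 2 * mm i ≤ L then 2 ^ (L - mm i) else 0) ≤
          (if i + 3 ≤ L then 2 ^ (L - (i + 3)) else 0) := by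
      intro i _
      unfold mm
      split_ifs with h1 h2
      · exact le_refl _
      · omega
      · exact Nat.zero_le _
      · exact le_refl _
    have hstep2 : (Finset.range L).sum (fun i => if i + 3 ≤ L then 2 ^ (L - (i + 3)) else 0)
        = (Finset.range (L - 2)).sum (fun i => 2 ^ (L - (i + 3))) := by
      rw [← Finset.sum_subset (Finset.range_subset_range.2 (by omega : L - 2 ≤ L))]
      · apply Finset.sum_congr rfl
        intro i hi
        rw [Finset.mem_range] at hi
        rw [if_pos (by omega)]
      · intro x hx hnx
        rw [Finset.mem_range] at hx
        rw [Finset.mem_range] at hnx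
        rw [if_neg (by omega)]
    have hstep3 : (Finset.range (L - 2)).sum (fun i => 2 ^ (L - (i + 3)))
        = (Finset.range (L - 2)).sum (fun j => 2 ^ j) := by
      have := Finset.sum_range_reflect (fun j => (2:ℕ) ^ j) (L - 2)
      rw [← this]
      apply Finset.sum_congr rfl
      intro i hi
      rw [Finset.mem_range] at hi
      congr 1
      omega
    calc (Finset.range L).sum (fun i => if 2 * mm i ≤ L then 2 ^ (L - mm i) else 0)
        ≤ (Finset.range L).sum (fun i => if i + 3 ≤ L then 2 ^ (L - (i + 3)) else 0) :=
          Finset.sum_le_sum hstep1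
      _ = (Finset.range (L - 2)).sum (fun j => 2 ^ j) := by rw [hstep2, hstep3]
      _ = 2 ^ (L - 2) - 1 := sum_two_pow _
      _ < 2 ^ L := by
          have h1 : (2:ℕ) ^ (L - 2) ≤ 2 ^ L := Nat.pow_le_pow_right (by norm_num) (by omega)
          have h2 : 1 ≤ (2:ℕ) ^ (L - 2) := Nat.one_le_two_pow
          omega
  rw [card_allStrings] at hcard
  omega
end SpecialPi01
namespace SpecialPi01

def Ext (σ : List Bool) : Prop :=
  ∀ L, σ.length ≤ L → ∃ τ : List Bool, σ <+: τ ∧ τ.length = L ∧ TB τ = true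

lemma ext_nil : Ext ([] : List Bool) := by
  intro L _
  obtain ⟨τ, hτ1, hτ2⟩ := exists_good L
  exact ⟨τ, List.nil_prefix, hτ1, hτ2⟩

lemma prefix_of_take {σ τ : List Bool} (h : σ <+: τ) {n : ℕ} (hn : σ.length ≤ n) :
    σ <+: τ.take n := by
  obtain ⟨t, rfl⟩ := h
  rw [List.take_append, List.take_of_length_le hn]
  exact ⟨t.take (n - σ.length), rfl⟩

lemma ext_step {σ : List Bool} (h : Ext σ) : ∃ b : Bool, Ext (σ ++ [b]) := by
  by_contra hcon
  push_neg at hcon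
  have hcon' : ∀ b : Bool, ∃ L, (σ ++ [b]).length ≤ L ∧
      ¬ ∃ τ : List Bool, (σ ++ [b]) <+: τ ∧ τ.length = L ∧ TB τ = true := by
    intro b
    have := hcon b
    unfold Ext at this
    push_neg at this
    obtain ⟨L, hL1, hL2⟩ := this
    exact ⟨L, hL1, by push_neg; exact hL2⟩
  obtain ⟨Lt, hLt1, hLt2⟩ := hcon' true
  obtain ⟨Lf, hLf1, hLf2⟩ := hcon' false
  set L := max Lt Lf with hL
  obtain ⟨τ, hpre, hlen, hTB⟩ := h L (by
    simp only [List.length_append, List.length_singleton] at hLt1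
    omega)
  have hlt : σ.length < τ.length := by
    simp only [List.length_append, List.length_singleton] at hLt1
    omega
  -- τ extends σ by at least one element
  obtain ⟨t, rfl⟩ := hpre
  have ht : t ≠ [] := by
    intro h0
    rw [h0] at hlt
    simp at hlt
  obtain ⟨b0, t', rfl⟩ := List.exists_cons_of_ne_nil ht
  have hpre1 : σ ++ [b0] <+: σ ++ b0 :: t' := by
    refine ⟨t', by simp⟩
  set Lb := if b0 then Lt else Lf with hLb
  have hLbL : Lb ≤ L := by
    cases b0 <;> simp [hLb, hL] <;> omega
  have hLb1 : σ.length + 1 ≤ Lb := by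
    simp only [List.length_append, List.length_singleton] at hLt1 hLf1
    cases b0 <;> simp [hLb] <;> omega
  refine (by cases b0 <;> [exact hLf2; exact hLt2] :
    ¬ ∃ τ : List Bool, (σ ++ [b0]) <+: τ ∧ τ.length = Lb ∧ TB τ = true) ?_
  refine ⟨(σ ++ b0 :: t').take Lb, ?_, ?_, ?_⟩
  · exact prefix_of_take hpre1 (by simpa using hLb1)
  · rw [List.length_take, hlen]
    omega
  · exact TB_mono (List.take_prefix _ _) hTB

noncomputable def chain : (n : ℕ) → {σ : List Bool // Ext σ ∧ σ.length = n}
  | 0 => ⟨[], ext_nil, rfl⟩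
  | n + 1 =>
    let c := chain n
    ⟨c.1 ++ [Classical.choose (ext_step c.2.1)],
      Classical.choose_spec (ext_step c.2.1), by simp [c.2.2]⟩

noncomputable def Apath : ℕ → Bool := fun n => ((chain (n + 1)).1).getD n false

lemma chain_map : ∀ n, (List.range n).map Apath = (chain n).1 := by
  intro n
  induction n with
  | zero => rfl
  | succ n ih =>
    rw [List.range_succ, List.map_append, ih]
    show (chain n).1 ++ [Apath n] = (chain (n+1)).1
    have hc : (chain (n+1)).1 = (chain n).1 ++ [Classical.choose (ext_step (chain n).2.1)] := rfl
    rw [hc]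
    congr 1
    show [((chain (n + 1)).1).getD n false] = _
    rw [hc]
    have hlen : ((chain n).1).length = n := (chain n).2.2
    rw [List.getD_eq_getElem?_getD, List.getElem?_append_right (by omega)]
    simp [hlen]
lemma TB_path (n : ℕ) : TB ((List.range n).map Apath) = true := by
  rw [chain_map]
  obtain ⟨τ, hp, hl, hT⟩ := (chain n).2.1 n (le_of_eq (chain n).2.2)
  have : (chain n).1 = τ := by
    refine List.IsPrefix.eq_of_length hp ?_
    rw [hl]
    exact (chain n).2.2
  rw [this]
  exact hT

end SpecialPi01
namespace SpecialPi01

open Nat.Partrec.Code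
open Encodable

def orc (A : ℕ → Bool) (b : ℕ) : ℕ → ℕ := fun n => if b = 1 then (A (2 * n)).toNat else 0

lemma ostr_path {A : ℕ → Bool} {b i t l : ℕ} (hb : b ≤ 1) (hi : i % 2 = b)
    (hl : l ≤ olen i t) :
    ostr i ((List.range t).map A) l = (List.range l).map (orc A b) := by
  unfold ostr
  have hlen : ((List.range t).map A).length = t := by simp
  rw [hlen, Nat.min_eq_left hl]
  apply List.map_congr_left
  intro n hn
  rw [List.mem_range] at hn
  unfold oval orc
  split
  · rename_i hpar
    have hb1 : b = 1 := by omega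
    rw [if_pos hb1]
    have h2n : 2 * n < t := by
      have h1 : l ≤ (t + 1) / 2 := by rw [olen, if_pos hpar] at hl; exact hl
      omega
    rw [path_getD h2n]
  · rename_i hpar
    have hb0 : b = 0 := by omega
    rw [if_neg (by omega)]

theorem bad_eventually (A : ℕ → Bool) (b : ℕ) (hb : b ≤ 1) (c : Nat.Partrec.Code)
    (hmono : ∀ {ρ ρ' : List ℕ}, ρ <+: ρ' → ∀ {n y : ℕ},
      y ∈ eval c (Nat.pair (encode ρ) n) → y ∈ eval c (Nat.pair (encode ρ') n))
    (hcor : ∀ n y, (y ∈ (Part.some ((A (2 * n + b)).toNat) : Part ℕ)) ↔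
      ∃ l, y ∈ eval c (Nat.pair (encode ((List.range l).map (orc A b))) n)) :
    ∃ t, 2 * encode c + b < t ∧
      badB (2 * encode c + b) ((List.range t).map A) = true := by
  classical
  set i := 2 * encode c + b with hi
  have hib : i % 2 = b := by omega
  have hid : i / 2 = encode c := by omega
  have hcd : cd i = c := by
    unfold cd
    rw [hid]
    exact Denumerable.ofNat_encode c
  set m := mm i with hm
  have hval : ∀ n, n < m → ∃ l, ((A (2 * n + b)).toNat) ∈
      eval c (Nat.pair (encode ((List.range l).map (orc A b))) n) :=
    fun n _ => (hcor n _).1 (Part.mem_some _)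
  choose lf hlf using hval
  set l0 := (Finset.range m).sup (fun n => if h : n < m then lf n h else 0) with hl0def
  have hl0 : ∀ n (hn : n < m), lf n hn ≤ l0 := by
    intro n hn
    have hmem : n ∈ Finset.range m := Finset.mem_range.2 hn
    have := Finset.le_sup (f := fun n => if h : n < m then lf n h else 0) hmem
    simpa [hn] using this
  have hev : ∀ n (hn : n < m), ((A (2 * n + b)).toNat) ∈
      eval c (Nat.pair (encode ((List.range l0).map (orc A b))) n) :=
    fun n hn => hmono (prefix_rangeMap (hl0 n hn)) (hlf n hn)
  have hst : ∀ n, n < m → ∃ s, ((A (2 * n + b)).toNat) ∈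
      evaln s c (Nat.pair (encode ((List.range l0).map (orc A b))) n) :=
    fun n hn => evaln_complete.1 (hev n hn)
  choose sf hsf using hst
  set s0 := (Finset.range m).sup (fun n => if h : n < m then sf n h else 0) with hs0def
  have hs0 : ∀ n (hn : n < m), sf n hn ≤ s0 := by
    intro n hn
    have hmem : n ∈ Finset.range m := Finset.mem_range.2 hn
    have := Finset.le_sup (f := fun n => if h : n < m then sf n h else 0) hmem
    simpa [hn] using this
  have hsev : ∀ n (hn : n < m), ((A (2 * n + b)).toNat) ∈
      evaln s0 c (Nat.pair (encode ((List.range l0).map (orc A b))) n) :=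
    fun n hn => evaln_mono (hs0 n hn) (hsf n hn)
  set p0 := Nat.pair s0 l0 with hp0
  set t := max (2 * m) (max (2 * p0 + 2) (i + 1)) with ht
  set σ := (List.range t).map A with hσ
  have hσlen : σ.length = t := by simp [hσ]
  have holt : p0 ≤ olen i t := by
    unfold olen
    by_cases hpar : i % 2 = 1
    · rw [if_pos hpar]; omega
    · rw [if_neg hpar]; omega
  have hup1 : p0.unpair.1 = s0 := by simp [hp0]
  have hup2 : p0.unpair.2 = l0 := by simp [hp0]
  have hl0le : l0 ≤ olen i t := le_trans (Nat.right_le_pair s0 l0) holt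
  have hconvp0 : convB i σ p0 = true := by
    unfold convB
    rw [List.all_eq_true]
    intro n hn
    rw [List.mem_range] at hn
    rw [hup1, hup2, hcd, hσ, ostr_path hb hib hl0le]
    have := hsev n hn
    rw [Option.mem_def] at this
    simp [this]
  have hex : ∃ p, convB i σ p = true := ⟨p0, hconvp0⟩
  set phat := Nat.find hex with hphatdef
  have hphat : convB i σ phat = true := Nat.find_spec hex
  have hple : phat ≤ olen i t := le_trans (Nat.find_min' hex hconvp0) holt
  have hlhat : phat.unpair.2 ≤ olen i t :=
    le_trans (Nat.unpair_right_le phat) hple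
  have hmt : matchB i σ phat = true := by
    unfold matchB
    rw [List.all_eq_true]
    intro n hn
    rw [List.mem_range] at hn
    rw [decide_eq_true_iff]
    have hcv := hphat
    unfold convB at hcv
    rw [List.all_eq_true] at hcv
    have hsome := hcv n (List.mem_range.2 hn)
    rw [Option.isSome_iff_exists] at hsome
    obtain ⟨w, hw⟩ := hsome
    have hwmem : w ∈ evaln phat.unpair.1 (cd i)
        (Nat.pair (encode (ostr i σ phat.unpair.2)) n) := hw
    have hweval := evaln_sound hwmem
    rw [hcd] at hweval
    rw [show ostr i σ phat.unpair.2 = (List.range phat.unpair.2).map (orc A b) from by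
      rw [hσ]; exact ostr_path hb hib hlhat] at hweval
    have hwv : w ∈ (Part.some ((A (2 * n + b)).toNat) : Part ℕ) :=
      (hcor n w).2 ⟨phat.unpair.2, hweval⟩
    have hwv' : w = (A (2 * n + b)).toNat := Part.mem_some_iff.1 hwv
    have hget : σ.getD (2 * n + i % 2) false = A (2 * n + b) := by
      rw [hσ, hib]
      refine path_getD ?_ _
      have : mm i = m := rfl
      omega
    rw [hget, ← hwv']
    exact hw
  refine ⟨t, by omega, ?_⟩
  rw [show (List.range t).map A = σ from rfl]
  refine bad_iff.2 ⟨by rw [hσlen]; omega, phat, by rw [hσlen]; exact hple, hphat, ?_, hmt⟩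
  intro q hq
  cases hcq : convB i σ q
  · rfl
  · exact absurd hcq (Nat.find_min hex hq)

end SpecialPi01

namespace SpecialPi01

open Encodable

lemma computable_double : Computable fun n : ℕ => 2 * n :=
  (Primrec.nat_mul.comp (Primrec.const 2) Primrec.id).to_comp

lemma computable_doubleSucc : Computable fun n : ℕ => 2 * n + 1 :=
  (Primrec.nat_add.comp (Primrec.nat_mul.comp (Primrec.const 2) Primrec.id)
    (Primrec.const 1)).to_comp

lemma member_not_bad {A : ℕ → Bool} (hA : ∀ n : ℕ, TB ((List.range n).map A) = true)
    {i t : ℕ} (hit : i < t) : badB i ((List.range t).map A) = false := by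
  have := TB_iff.1 (hA t)
  exact this i (by simp [hit])

lemma notCompC {A : ℕ → Bool} (hA : ∀ n : ℕ, TB ((List.range n).map A) = true) :
    ¬ ComputableSet (fun n => A (2 * n)) := by
  intro h
  have h' : RecursiveInOracle (boolOracle fun _ => false)
      (fun n => Part.some ((A (2 * n)).toNat)) := h
  obtain ⟨c, hmono, hcor⟩ := exists_code_machine h'
  have hO : boolOracle (fun _ => false) = orc A 0 := funext fun n => by
    simp [boolOracle, orc]
  rw [hO] at hcor
  have hcor' : ∀ n y, (y ∈ (Part.some ((A (2 * n + 0)).toNat) : Part ℕ)) ↔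
      ∃ l, y ∈ Nat.Partrec.Code.eval c
        (Nat.pair (encode ((List.range l).map (orc A 0))) n) := by
    intro n y
    simpa using hcor n y
  obtain ⟨t, hti, hbad⟩ := bad_eventually A 0 (by norm_num) c hmono hcor'
  have := member_not_bad hA hti
  rw [this] at hbad
  exact absurd hbad (by simp)

lemma notTLE {A : ℕ → Bool} (hA : ∀ n : ℕ, TB ((List.range n).map A) = true) :
    ¬ TuringLE A (fun n => A (2 * n)) := by
  intro h
  have h' : RecursiveInOracle (boolOracle fun n => A (2 * n))
      (fun n => Part.some ((A n).toNat)) := h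
  have h2 : RecursiveInOracle (boolOracle fun n => A (2 * n))
      (fun n => Part.some ((A (2 * n + 1)).toNat)) :=
    recIn_comp_total h' computable_doubleSucc
  obtain ⟨c, hmono, hcor⟩ := exists_code_machine h2
  have hO : boolOracle (fun n => A (2 * n)) = orc A 1 := funext fun n => by
    simp [boolOracle, orc]
  rw [hO] at hcor
  obtain ⟨t, hti, hbad⟩ := bad_eventually A 1 (le_refl 1) c hmono hcor
  have := member_not_bad hA hti
  rw [this] at hbad
  exact absurd hbad (by simp)

lemma notCompA {A : ℕ → Bool} (hA : ∀ n : ℕ, TB ((List.range n).map A) = true) :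
    ¬ ComputableSet A := by
  intro h
  have h' : RecursiveInOracle (boolOracle fun _ => false)
      (fun n => Part.some ((A n).toNat)) := h
  have h2 : RecursiveInOracle (boolOracle fun _ => false)
      (fun n => Part.some ((A (2 * n)).toNat)) :=
    recIn_comp_total h' computable_double
  exact notCompC hA h2

lemma tleC {A : ℕ → Bool} : TuringLE (fun n => A (2 * n)) A := by
  have h := recIn_comp_total (RecursiveInOracle.oracle (O := boolOracle A)) computable_double
  exact h

end SpecialPi01

/-- There is a nonempty special `Π⁰₁` class no member of which is of minimal degree. -/
theorem exists_special_Pi01_class_no_minimal_member :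
    ∃ P : Set (ℕ → Bool), IsPi01Class P ∧ P.Nonempty ∧
      (∀ A ∈ P, ¬ ComputableSet A) ∧
      (∀ A ∈ P, ∃ C : ℕ → Bool, ¬ ComputableSet C ∧ TuringLT C A) := by
  classical
  refine ⟨{A : ℕ → Bool | ∀ n : ℕ, SpecialPi01.TB ((List.range n).map A) = true},
    ?_, ?_, ?_, ?_⟩
  · exact ⟨SpecialPi01.TB, SpecialPi01.computable_TB,
      fun σ τ hpre hT => SpecialPi01.TB_mono hpre hT, fun A => Iff.rfl⟩
  · exact ⟨SpecialPi01.Apath, fun n => SpecialPi01.TB_path n⟩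
  · intro A hA
    exact SpecialPi01.notCompA hA
  · intro A hA
    exact ⟨fun n => A (2 * n), SpecialPi01.notCompC hA,
      SpecialPi01.tleC, SpecialPi01.notTLE hA⟩
end
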